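/- For each fixed m ≥ 1, the ratio w(n,m)/(m·(n-1)!!/n!!) tends to 1 as n → ∞ along either parity class; equivalently, w(n,m)·√n converges to m·√(π/2) along odd n and to m·√(2/π) along even n. -/

import Mathlib

/-- Double factorial: 0!! = 1, 1!! = 1, n!! = n·(n-2)!!. -/
def dfact : ℕ → ℕ
  | 0 => 1
  | 1 => 1
  | n + 2 => (n + 2) * dfact n

/-- Mafia winning-chance: w(n,0)=0, w(n,m)=1 if 2m>n, else
    w(n,m) = ((n-m)/n)·w(n-2,m) + (m/n)·w(n-2,m-1). -/
def w : ℕ → ℕ → ℚ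
  | _, 0 => 0
  | n, m + 1 =>
    if h : 2 * (m + 1) > n then 1
    else ((n : ℚ) - (m + 1)) / n * w (n - 2) (m + 1)
      + ((m : ℚ) + 1) / n * w (n - 2) m
  termination_by n _ => n
  decreasing_by all_goals omega

lemma dfact_pos : ∀ n, 0 < dfact n
  | 0 => one_pos
  | 1 => one_pos
  | n+2 => mul_pos (by omega) (dfact_pos n)

lemma dfact_two_step (n : ℕ) (h : 2 ≤ n) : dfact n = n * dfact (n - 2) := by
  obtain ⟨k, rfl⟩ : ∃ k, n = k + 2 := ⟨n - 2, by omega⟩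
  simp [dfact]

lemma dfact_sub_one (n : ℕ) (h : 2 ≤ n) : dfact (n - 1) = (n - 1) * dfact (n - 3) := by
  match n, h with
  | 2, _ => decide
  | 3, _ => decide
  | (k+4), _ => show dfact (k+3) = (k+3) * dfact (k+1); simp [dfact]

lemma w_nonneg (n : ℕ) : ∀ m, 0 ≤ w n m := by
  induction n using Nat.strong_induction_on with
  | _ n ih =>
    intro m
    match m with
    | 0 => rw [w]
    | m+1 =>
      rw [w]
      split
      · exact zero_le_one
      · rename_i h
        push_neg at h
        have hn2 : 2 ≤ n := by omega
        have h1 := ih (n-2) (by omega) (m+1)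
        have h2 := ih (n-2) (by omega) m
        have hn : (0:ℚ) < (n:ℚ) := by exact_mod_cast (by omega : 0 < n)
        have hc1 : (0:ℚ) ≤ ((n:ℚ) - (m+1)) / n := by
          apply div_nonneg _ hn.le
          have : ((m:ℚ)+1) ≤ n := by exact_mod_cast (by omega : m+1 ≤ n)
          linarith
        have hc2 : (0:ℚ) ≤ ((m:ℚ)+1) / n := by positivity
        exact add_nonneg (mul_nonneg hc1 h1) (mul_nonneg hc2 h2)

lemma w_le_one (n : ℕ) : ∀ m, w n m ≤ 1 := by
  induction n using Nat.strong_induction_on with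
  | _ n ih =>
    intro m
    match m with
    | 0 => rw [w]; norm_num
    | m+1 =>
      rw [w]
      split
      · exact le_refl 1
      · rename_i h
        push_neg at h
        have hn2 : 2 ≤ n := by omega
        have h1 := ih (n-2) (by omega) (m+1)
        have h2 := ih (n-2) (by omega) m
        have h1' := w_nonneg (n-2) (m+1)
        have h2' := w_nonneg (n-2) m
        have hn : (0:ℚ) < (n:ℚ) := by exact_mod_cast (by omega : 0 < n)
        have hm' : ((m:ℚ)+1) ≤ n := by exact_mod_cast (by omega : m+1 ≤ n)
        have hc1 : (0:ℚ) ≤ ((n:ℚ) - (m+1)) / n := by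
          apply div_nonneg _ hn.le; linarith
        have hc2 : (0:ℚ) ≤ ((m:ℚ)+1) / n := by positivity
        calc ((n:ℚ) - (m+1)) / n * w (n-2) (m+1) + ((m:ℚ)+1)/n * w (n-2) m
            ≤ ((n:ℚ) - (m+1)) / n * 1 + ((m:ℚ)+1)/n * 1 := by
              gcongr
          _ = 1 := by field_simp; ring

lemma dfact_ratio (m : ℕ) (hm : 1 ≤ m) :
    dfact (2*m - 2) ≤ m * dfact (2*m - 3) ∧ dfact (2*m - 1) ≤ m * dfact (2*m - 2) := by
  induction m, hm using Nat.le_induction with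
  | base => decide
  | succ m hm ih =>
    obtain ⟨ih1, ih2⟩ := ih
    constructor
    · have e1 : 2*(m+1) - 2 = (2*m - 2) + 2 := by omega
      have e2 : 2*(m+1) - 3 = 2*m - 1 := by omega
      rw [e1, e2, dfact]
      have h3 : 2*m - 2 + 2 = 2*m := by omega
      rw [h3]
      -- goal: 2m * dfact (2m-2) ≤ (m+1) * dfact (2m-1)
      -- case m = 1 separately? dfact(2m-1) = (2m-1) * dfact(2m-3) for 2m ≥ 2
      have h4 : dfact (2*m - 1) = (2*m - 1) * dfact (2*m - 3) := by
        have := dfact_sub_one (2*m) (by omega)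
        simpa using this
      calc 2*m * dfact (2*m-2) ≤ 2*m * (m * dfact (2*m-3)) := by
            exact Nat.mul_le_mul_left _ ih1
        _ ≤ (m+1) * ((2*m - 1) * dfact (2*m-3)) := by
            have : 2*m*m ≤ (m+1)*(2*m-1) := by
              zify [show (1:ℕ) ≤ 2*m by omega]; nlinarith
            calc 2*m * (m * dfact (2*m-3)) = (2*m*m) * dfact (2*m-3) := by ring
              _ ≤ ((m+1)*(2*m-1)) * dfact (2*m-3) := Nat.mul_le_mul_right _ this
              _ = (m+1) * ((2*m-1) * dfact (2*m-3)) := by ring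
        _ = (m+1) * dfact (2*m-1) := by rw [h4]
    · have e1 : 2*(m+1) - 1 = (2*m - 1) + 2 := by omega
      have e2 : 2*(m+1) - 2 = 2*m := by omega
      rw [e1, e2, dfact]
      have h3 : 2*m - 1 + 2 = 2*m + 1 := by omega
      rw [h3]
      have h4 : dfact (2*m) = 2*m * dfact (2*m - 2) := by
        have := dfact_two_step (2*m) (by omega); simpa using this
      calc (2*m+1) * dfact (2*m-1) ≤ (2*m+1) * (m * dfact (2*m-2)) :=
            Nat.mul_le_mul_left _ ih2
        _ ≤ (m+1) * (2*m * dfact (2*m-2)) := by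
            have : (2*m+1)*m ≤ (m+1)*(2*m) := by nlinarith
            calc (2*m+1) * (m * dfact (2*m-2)) = ((2*m+1)*m) * dfact (2*m-2) := by ring
              _ ≤ ((m+1)*(2*m)) * dfact (2*m-2) := Nat.mul_le_mul_right _ this
              _ = (m+1) * (2*m * dfact (2*m-2)) := by ring
        _ = (m+1) * dfact (2*m) := by rw [h4]

lemma w_one (n : ℕ) : (w n 1) * dfact n = dfact (n - 1) := by
  induction n using Nat.strong_induction_on with
  | _ n ih =>
    match n with
    | 0 => rw [w]; norm_num [dfact]
    | 1 => rw [w]; norm_num [dfact]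
    | (k+2) =>
      rw [w, dif_neg (by omega : ¬ 2*(0+1) > k+2)]
      have hw0 : w k 0 = 0 := by rw [w]
      have hih := ih k (by omega)
      have hd : (dfact (k+2) : ℚ) = ((k:ℚ)+2) * dfact k := by
        rw [show dfact (k+2) = (k+2) * dfact k from rfl]; push_cast; ring
      have hd1 : (dfact (k+2-1) : ℚ) = ((k:ℚ)+1) * dfact (k-1) := by
        have h := dfact_sub_one (k+2) (by omega)
        rw [show k+2-1 = k+1 from rfl, show k+2-3 = k-1 by omega] at h
        rw [show k+2-1 = k+1 from rfl, h]; push_cast; ring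
      show ((↑(k+2) - ((0:ℚ)+1)) / ↑(k+2) * w k (0+1) + ((0:ℚ)+1) / ↑(k+2) * w k 0) * ↑(dfact (k+2)) = ↑(dfact (k+2-1))
      rw [hw0, hd, hd1]
      have hk : ((k:ℚ)+2) ≠ 0 := by positivity
      push_cast
      field_simp
      linear_combination ((k:ℚ)+1) * hih

-- main recurrence in multiplied form
lemma w_rec (n m : ℕ) (hm : 1 ≤ m) (h : 2*m ≤ n) :
    (w n m) * n = ((n:ℚ) - m) * w (n-2) m + (m:ℚ) * w (n-2) (m-1) := by
  obtain ⟨m', rfl⟩ : ∃ m', m = m'+1 := ⟨m-1, by omega⟩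
  rw [w, dif_neg (by omega)]
  have hn : ((n:ℚ)) ≠ 0 := by
    have : (0:ℕ) < n := by omega
    exact_mod_cast this.ne'
  push_cast
  field_simp

lemma w_upper (n : ℕ) : ∀ m, 2*m ≤ n + 2 → (w n m) * dfact n ≤ (m:ℚ) * dfact (n-1) := by
  induction n using Nat.strong_induction_on with
  | _ n ih =>
    intro m hm2
    match m with
    | 0 => rw [w]; simp
    | m+1 =>
      by_cases hbig : 2*(m+1) > n
      · -- n = 2m or 2m+1, w = 1
        rw [w, dif_pos hbig, one_mul]
        have key : dfact n ≤ (m+1) * dfact (n-1) := by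
          rcases (by omega : n = 2*(m+1) - 2 ∨ n = 2*(m+1) - 1) with h | h
          · subst h
            have := (dfact_ratio (m+1) (by omega)).1
            have e : 2*(m+1) - 2 - 1 = 2*(m+1) - 3 := by omega
            rw [e]; exact this
          · subst h
            have := (dfact_ratio (m+1) (by omega)).2
            have e : 2*(m+1) - 1 - 1 = 2*(m+1) - 2 := by omega
            rw [e]; exact this
        calc ((dfact n : ℚ)) ≤ ((m+1) * dfact (n-1) : ℕ) := by exact_mod_cast key
          _ = ((m+1:ℕ):ℚ) * dfact (n-1) := by push_cast; ring
      · push_neg at hbig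
        have hn2 : 2 ≤ n := by omega
        have hrec := w_rec n (m+1) (by omega) hbig
        simp only [Nat.add_sub_cancel] at hrec
        have hd : (dfact n : ℚ) = (n:ℚ) * dfact (n-2) := by
          rw [dfact_two_step n hn2]; push_cast; rfl
        have hd1 : (dfact (n-1) : ℚ) = ((n:ℚ)-1) * dfact (n-3) := by
          rw [dfact_sub_one n hn2]
          have : ((n-1:ℕ):ℚ) = (n:ℚ)-1 := by
            push_cast [Nat.cast_sub (by omega : 1 ≤ n)]; ring
          push_cast [Nat.cast_sub (by omega : 1 ≤ n)]; ring
        have ih1 := ih (n-2) (by omega) (m+1) (by omega)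
        have ih2 := ih (n-2) (by omega) m (by omega)
        have e32 : n - 2 - 1 = n - 3 := by omega
        rw [e32] at ih1 ih2
        have hcast : ((m+1:ℕ):ℚ) = (m:ℚ)+1 := by push_cast; ring
        rw [hcast] at ih1
        -- multiply hrec by dfact(n-2)
        have key : (w n (m+1)) * ((n:ℚ) * dfact (n-2))
            = ((n:ℚ) - (m+1)) * (w (n-2) (m+1) * dfact (n-2))
              + ((m:ℚ)+1) * (w (n-2) m * dfact (n-2)) := by
          have := congrArg (· * (dfact (n-2) : ℚ)) hrec
          push_cast at this ⊢
          linear_combination this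
        have hc1 : (0:ℚ) ≤ (n:ℚ) - (m+1) := by
          have : ((m:ℚ)+1) ≤ n := by exact_mod_cast (by omega : m+1 ≤ n)
          linarith
        have hc2 : (0:ℚ) ≤ (m:ℚ) + 1 := by positivity
        calc (w n (m+1)) * (dfact n : ℚ)
            = ((n:ℚ) - (m+1)) * (w (n-2) (m+1) * dfact (n-2))
              + ((m:ℚ)+1) * (w (n-2) m * dfact (n-2)) := by rw [hd]; exact key
          _ ≤ ((n:ℚ) - (m+1)) * (((m:ℚ)+1) * dfact (n-3))
              + ((m:ℚ)+1) * ((m:ℚ) * dfact (n-3)) := by gcongr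
          _ = ((m:ℚ)+1) * (((n:ℚ)-1) * dfact (n-3)) := by ring
          _ = ((m:ℚ)+1) * dfact (n-1) := by rw [hd1]
          _ = ((m+1:ℕ):ℚ) * dfact (n-1) := by push_cast; ring


open Filter Real

lemma dfact_pos' (n : ℕ) : (0:ℝ) < dfact n := by exact_mod_cast dfact_pos n

noncomputable def pp (k : ℕ) : ℝ := (dfact (2*k) : ℝ) / (dfact (2*k+1) : ℝ)
noncomputable def qq (k : ℕ) : ℝ := (dfact (2*k-1) : ℝ) / (dfact (2*k) : ℝ)

lemma pp_pos (k : ℕ) : 0 < pp k := div_pos (dfact_pos' _) (dfact_pos' _)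
lemma qq_pos (k : ℕ) : 0 < qq k := div_pos (dfact_pos' _) (dfact_pos' _)

lemma dfact_odd_step (k : ℕ) : (dfact (2*k+1) : ℝ) = (2*(k:ℝ)+1) * dfact (2*k-1) := by
  cases k with
  | zero => norm_num [dfact]
  | succ k =>
    have e : 2*(k+1)+1 = (2*k+1)+2 := by ring
    have e2 : 2*(k+1)-1 = 2*k+1 := by omega
    rw [e, e2, show dfact (2*k+1+2) = (2*k+1+2) * dfact (2*k+1) from rfl]
    push_cast; ring

lemma W_eq (k : ℕ) :
    Real.Wallis.W k = (dfact (2*k):ℝ)^2 / ((dfact (2*k-1):ℝ) * (dfact (2*k+1):ℝ)) := by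
  induction k with
  | zero => simp [Real.Wallis.W, dfact]
  | succ k ih =>
    rw [Real.Wallis.W_succ, ih]
    rw [show 2*(k+1) = (2*k)+2 by ring]
    rw [show 2*k+2-1 = 2*k+1 by omega, show 2*k+2+1 = (2*k+1)+2 by ring]
    rw [show dfact (2*k+2) = (2*k+2) * dfact (2*k) from rfl,
        show dfact (2*k+1+2) = (2*k+1+2) * dfact (2*k+1) from rfl]
    have h0 := dfact_pos' (2*k)
    have h1 := dfact_pos' (2*k-1)
    have h2 := dfact_pos' (2*k+1)
    push_cast
    rw [div_mul_div_comm, div_mul_div_comm]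
    rw [div_eq_div_iff (by positivity) (by positivity)]
    rw [dfact_odd_step k]
    ring

lemma W_eq' (k : ℕ) : Real.Wallis.W k = pp k ^ 2 * (2*(k:ℝ)+1) := by
  rw [W_eq, pp]
  have h1 := dfact_pos' (2*k-1)
  have h2 := dfact_pos' (2*k+1)
  have h0 := dfact_pos' (2*k)
  rw [div_pow, div_mul_eq_mul_div, div_eq_div_iff (by positivity) (by positivity)]
  rw [dfact_odd_step k]
  ring

lemma qq_W (k : ℕ) : qq k ^ 2 * (2*(k:ℝ)+1) = (Real.Wallis.W k)⁻¹ := by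
  rw [W_eq, qq]
  have h1 := dfact_pos' (2*k-1)
  have h2 := dfact_pos' (2*k+1)
  have h0 := dfact_pos' (2*k)
  rw [div_pow]
  rw [inv_div]
  rw [div_mul_eq_mul_div, div_eq_div_iff (by positivity) (by positivity)]
  rw [dfact_odd_step k]
  ring

lemma tendsto_pp_sqrt :
    Tendsto (fun k : ℕ => pp k * Real.sqrt (2*(k:ℝ)+1)) atTop (nhds (Real.sqrt (π/2))) := by
  have h2 : Tendsto (fun k => Real.sqrt (Real.Wallis.W k)) atTop (nhds (Real.sqrt (π/2))) :=
    (Real.continuous_sqrt.tendsto _).comp Real.Wallis.tendsto_W_nhds_pi_div_two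
  refine h2.congr fun k => ?_
  rw [W_eq', Real.sqrt_mul (by positivity), Real.sqrt_sq (pp_pos k).le]

lemma tendsto_two_mul_nat : Tendsto (fun k : ℕ => 2*k) atTop atTop :=
  tendsto_atTop_atTop.mpr (fun b => ⟨b, fun a ha => by omega⟩)

lemma tendsto_qq_sq :
    Tendsto (fun k : ℕ => qq k ^ 2 * (2*(k:ℝ))) atTop (nhds (2/π)) := by
  have hW : Tendsto (fun k => (Real.Wallis.W k)⁻¹) atTop (nhds (π/2)⁻¹) :=
    Real.Wallis.tendsto_W_nhds_pi_div_two.inv₀ (by positivity)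
  have hfrac : Tendsto (fun k : ℕ => (2*(k:ℝ))/(2*(k:ℝ)+1)) atTop (nhds 1) := by
    have h := (tendsto_natCast_div_add_atTop (1:ℝ)).comp tendsto_two_mul_nat
    refine h.congr fun k => ?_
    simp only [Function.comp]
    push_cast
    ring_nf
  have := hW.mul hfrac
  rw [mul_one] at this
  have he : (π/2)⁻¹ = 2/π := by rw [inv_div]
  rw [he] at this
  refine this.congr fun k => ?_
  rw [← qq_W k]
  have : (2*(k:ℝ)+1) ≠ 0 := by positivity
  field_simp

lemma tendsto_qq_sqrt :
    Tendsto (fun k : ℕ => qq k * Real.sqrt (2*(k:ℝ))) atTop (nhds (Real.sqrt (2/π))) := by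
  have h2 := (Real.continuous_sqrt.tendsto _).comp tendsto_qq_sq
  refine h2.congr fun k => ?_
  simp only [Function.comp]
  rw [Real.sqrt_mul (by positivity), Real.sqrt_sq (qq_pos k).le]

lemma sqrt_aux (c : ℝ) (hc : ∀ k : ℕ, (k:ℝ) ≤ c + 2*(k:ℝ)) (hc0 : ∀ k:ℕ, 0 ≤ c + 2*(k:ℝ)) :
    Tendsto (fun k : ℕ => Real.sqrt (c + 2*(k:ℝ))) atTop atTop := by
  rw [tendsto_atTop_atTop]
  intro b
  refine ⟨⌈b^2⌉₊, fun k hk => ?_⟩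
  rcases le_or_gt b 0 with hb | hb
  · exact hb.trans (Real.sqrt_nonneg _)
  · have h1 : b^2 ≤ (k:ℝ) := (Nat.ceil_le.mp hk)
    rw [show b = Real.sqrt (b^2) from (Real.sqrt_sq hb.le).symm]
    exact Real.sqrt_le_sqrt (h1.trans (hc k))

lemma tendsto_sqrt_odd_atTop :
    Tendsto (fun k : ℕ => Real.sqrt (2*(k:ℝ)+1)) atTop atTop := by
  have := sqrt_aux 1 (fun k => by linarith [Nat.cast_nonneg (α := ℝ) k])
    (fun k => by positivity)
  refine this.congr fun k => by ring_nf

lemma tendsto_sqrt_even_atTop :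
    Tendsto (fun k : ℕ => Real.sqrt (2*(k:ℝ))) atTop atTop := by
  have := sqrt_aux 0 (fun k => by linarith [Nat.cast_nonneg (α := ℝ) k])
    (fun k => by positivity)
  refine this.congr fun k => by ring_nf

lemma tendsto_pp_zero : Tendsto pp atTop (nhds 0) := by
  have h := tendsto_pp_sqrt.mul (tendsto_inv_atTop_zero.comp tendsto_sqrt_odd_atTop)
  rw [mul_zero] at h
  refine h.congr fun k => ?_
  simp only [Function.comp]
  have hs : Real.sqrt (2*(k:ℝ)+1) ≠ 0 := by
    positivity
  field_simp

lemma tendsto_qq_zero : Tendsto qq atTop (nhds 0) := by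
  have h := tendsto_qq_sqrt.mul (tendsto_inv_atTop_zero.comp tendsto_sqrt_even_atTop)
  rw [mul_zero] at h
  refine Tendsto.congr' ?_ h
  filter_upwards [eventually_ge_atTop 1] with k hk
  simp only [Function.comp]
  have hs : Real.sqrt (2*(k:ℝ)) ≠ 0 := by
    have : (0:ℝ) < 2*(k:ℝ) := by
      have : (1:ℝ) ≤ (k:ℝ) := by exact_mod_cast hk
      linarith
    positivity
  field_simp

noncomputable def DD (n : ℕ) : ℝ := (dfact (n-2) : ℝ) / (dfact (n-1) : ℝ)

lemma DD_pos (n : ℕ) : 0 < DD n := div_pos (dfact_pos' _) (dfact_pos' _)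

lemma DD_odd (k : ℕ) : DD (2*k+1) = qq k := by
  unfold DD qq
  rw [show 2*k+1-2 = 2*k-1 by omega, show 2*k+1-1 = 2*k by omega]

lemma DD_even (k : ℕ) (hk : 1 ≤ k) : DD (2*k) = pp (k-1) := by
  unfold DD pp
  rw [show 2*k-2 = 2*(k-1) by omega, show 2*k-1 = 2*(k-1)+1 by omega]

lemma tendsto_DD_odd : Tendsto (fun k : ℕ => DD (2*k+1)) atTop (nhds 0) :=
  tendsto_qq_zero.congr fun k => (DD_odd k).symm

lemma tendsto_DD_even : Tendsto (fun k : ℕ => DD (2*k)) atTop (nhds 0) := by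
  have h := tendsto_pp_zero.comp (tendsto_sub_atTop_nat 1)
  refine Tendsto.congr' ?_ h
  filter_upwards [eventually_ge_atTop 1] with k hk
  simp only [Function.comp]
  exact (DD_even k hk).symm

noncomputable def E (n m : ℕ) : ℝ := (m : ℝ) - (w n m : ℝ) * (dfact n : ℝ) / (dfact (n-1) : ℝ)

lemma E_le (n m : ℕ) : E n m ≤ m := by
  unfold E
  have h1 : (0:ℝ) ≤ (w n m : ℝ) := by exact_mod_cast w_nonneg n m
  have h2 := dfact_pos' n
  have h3 := dfact_pos' (n-1)
  have : 0 ≤ (w n m : ℝ) * dfact n / dfact (n-1) := by positivity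
  linarith

lemma E_nonneg (n m : ℕ) (h : 2*m ≤ n + 2) : 0 ≤ E n m := by
  unfold E
  have h1 : (w n m : ℝ) * dfact n ≤ (m:ℝ) * dfact (n-1) := by
    have := w_upper n m h
    have := (Rat.cast_le (K := ℝ)).mpr this
    push_cast at this ⊢
    convert this using 2 <;> norm_num
  have h3 := dfact_pos' (n-1)
  rw [sub_nonneg, div_le_iff₀ h3]
  linarith

lemma E_zero (n : ℕ) : E n 0 = 0 := by
  unfold E
  rw [w]
  norm_num

lemma E_one (n : ℕ) : E n 1 = 0 := by
  unfold E
  have h := w_one n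
  have h' : (w n 1 : ℝ) * dfact n = dfact (n-1) := by exact_mod_cast h
  rw [h', div_self (dfact_pos' (n-1)).ne']
  norm_num

lemma E_rec (n m : ℕ) (hm : 1 ≤ m) (h : 2*m ≤ n) :
    E n m = ((n:ℝ)-m)/((n:ℝ)-1) * E (n-2) m + (m:ℝ)/((n:ℝ)-1) * E (n-2) (m-1) := by
  have hn2 : 2 ≤ n := by omega
  have hw := w_rec n m hm h
  have hwR : (w n m : ℝ) * n = ((n:ℝ)-m) * (w (n-2) m : ℝ) + (m:ℝ) * (w (n-2) (m-1) : ℝ) := by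
    exact_mod_cast hw
  have hd : (dfact n : ℝ) = (n:ℝ) * dfact (n-2) := by
    rw [dfact_two_step n hn2]; push_cast; ring
  have hd1 : (dfact (n-1) : ℝ) = ((n:ℝ)-1) * dfact (n-3) := by
    rw [dfact_sub_one n hn2]
    push_cast [Nat.cast_sub (by omega : 1 ≤ n)]
    ring
  have e32 : n - 2 - 1 = n - 3 := by omega
  unfold E
  rw [e32, hd, hd1]
  have hn0 : ((n:ℝ)-1) ≠ 0 := by
    have : (2:ℝ) ≤ (n:ℝ) := by exact_mod_cast hn2
    linarith
  have hdn3 := (dfact_pos' (n-3)).ne'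
  have hmcast : ((m - 1 : ℕ) : ℝ) = (m:ℝ) - 1 := by
    push_cast [Nat.cast_sub hm]; ring
  rw [hmcast]
  field_simp
  ring_nf
  linear_combination -(dfact (n-2) : ℝ) * hwR

lemma DD_rec (n : ℕ) (h : 4 ≤ n) : DD n = ((n:ℝ)-2)/((n:ℝ)-1) * DD (n-2) := by
  unfold DD
  have hd2 : (dfact (n-2) : ℝ) = ((n:ℝ)-2) * dfact (n-4) := by
    rw [dfact_two_step (n-2) (by omega), show n-2-2 = n-4 by omega]
    push_cast [Nat.cast_sub (by omega : 2 ≤ n)]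
    ring
  have hd1 : (dfact (n-1) : ℝ) = ((n:ℝ)-1) * dfact (n-3) := by
    rw [dfact_sub_one n (by omega)]
    push_cast [Nat.cast_sub (by omega : 1 ≤ n)]
    ring
  rw [show n-2-1 = n-3 by omega, show n-2-2 = n-4 by omega, hd2, hd1]
  have h1 : ((n:ℝ)-1) ≠ 0 := by
    have : (4:ℝ) ≤ (n:ℝ) := by exact_mod_cast h
    linarith
  have h2 := (dfact_pos' (n-3)).ne'
  field_simp

lemma key_iter (m N : ℕ) (hm : 2 ≤ m) (hN : 2*m ≤ N) (ε : ℝ) (hε : 0 < ε)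
    (hsmall : ∀ j : ℕ, E (N + 2*j) (m-1) ≤ ε) :
    ∀ j : ℕ, (E (N + 2*j) m - (m:ℝ)*ε/((m:ℝ)-1)) * DD N ≤ (m:ℝ) * DD (N + 2*j) := by
  have hm1 : (1:ℝ) ≤ (m:ℝ) - 1 := by
    have : (2:ℝ) ≤ (m:ℝ) := by exact_mod_cast hm
    linarith
  have hB : 0 ≤ (m:ℝ)*ε/((m:ℝ)-1) := by positivity
  set B := (m:ℝ)*ε/((m:ℝ)-1) with hBdef
  intro j
  induction j with
  | zero =>
    have h1 := E_le N m
    have h2 := (DD_pos N).le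
    have : E (N + 2*0) m - B ≤ (m:ℝ) := by simpa using by linarith [E_le (N+2*0) m]
    calc (E (N + 2*0) m - B) * DD N ≤ (m:ℝ) * DD N := by
          apply mul_le_mul_of_nonneg_right this h2
      _ = (m:ℝ) * DD (N + 2*0) := by norm_num
  | succ j ih =>
    set n := N + 2*(j+1) with hn
    have hn2 : n - 2 = N + 2*j := by omega
    have hnge : 2*m + 2 ≤ n := by omega
    have hnR : (2*(m:ℝ) + 2) ≤ (n:ℝ) := by exact_mod_cast hnge
    have hrec := E_rec n m (by omega) (by omega)
    rw [hn2] at hrec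
    have hc1 : (0:ℝ) ≤ ((n:ℝ)-m)/((n:ℝ)-1) := by
      apply div_nonneg <;> nlinarith [Nat.cast_nonneg (α := ℝ) m]
    have hc2 : (0:ℝ) ≤ (m:ℝ)/((n:ℝ)-1) := by
      apply div_nonneg <;> nlinarith [Nat.cast_nonneg (α := ℝ) m]
    have hstep : E n m - B ≤ ((n:ℝ)-m)/((n:ℝ)-1) * (E (N + 2*j) m - B) := by
      rw [hrec]
      have h1 : (m:ℝ)/((n:ℝ)-1) * E (N + 2*j) (m-1) ≤ (m:ℝ)/((n:ℝ)-1) * ε :=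
        mul_le_mul_of_nonneg_left (hsmall j) hc2
      have halg : ((n:ℝ)-m)/((n:ℝ)-1) * B + (m:ℝ)/((n:ℝ)-1) * ε - B = 0 := by
        rw [hBdef]
        have hne : ((n:ℝ)-1) ≠ 0 := by nlinarith
        have hne2 : ((m:ℝ)-1) ≠ 0 := by linarith
        field_simp
        ring
      nlinarith [h1]
    have hmul : (E n m - B) * DD N ≤ ((n:ℝ)-m)/((n:ℝ)-1) * ((E (N + 2*j) m - B) * DD N) := by
      have := mul_le_mul_of_nonneg_right hstep (DD_pos N).le
      linarith [this]
    calc (E n m - B) * DD N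
        ≤ ((n:ℝ)-m)/((n:ℝ)-1) * ((E (N + 2*j) m - B) * DD N) := hmul
      _ ≤ ((n:ℝ)-m)/((n:ℝ)-1) * ((m:ℝ) * DD (N + 2*j)) :=
          mul_le_mul_of_nonneg_left ih hc1
      _ ≤ ((n:ℝ)-2)/((n:ℝ)-1) * ((m:ℝ) * DD (N + 2*j)) := by
          have hX : 0 ≤ (m:ℝ) * DD (N+2*j) := mul_nonneg (Nat.cast_nonneg m) (DD_pos _).le
          have hden : (0:ℝ) < (n:ℝ)-1 := by nlinarith
          have hmR : (2:ℝ) ≤ (m:ℝ) := by exact_mod_cast hm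
          have hnum : ((n:ℝ)-(m:ℝ)) ≤ ((n:ℝ)-2) := by linarith
          exact mul_le_mul_of_nonneg_right (by gcongr) hX
      _ = (m:ℝ) * DD n := by
          rw [DD_rec n (by omega), hn2]
          ring

lemma tendsto_DD_par (r : ℕ) (hr : r ≤ 1) :
    Tendsto (fun k : ℕ => DD (2*k+r)) atTop (nhds 0) := by
  interval_cases r
  · exact tendsto_DD_even.congr fun k => by norm_num
  · exact tendsto_DD_odd

lemma E_tendsto (r : ℕ) (hr : r ≤ 1) : ∀ m, 1 ≤ m →
    Tendsto (fun k : ℕ => E (2*k+r) m) atTop (nhds 0) := by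
  intro m hm
  induction m, hm using Nat.le_induction with
  | base => exact tendsto_const_nhds.congr fun k => (E_one _).symm
  | succ m hm ih =>
    rw [Metric.tendsto_atTop] at ih ⊢
    intro ε hε
    obtain ⟨K₁, hK₁⟩ := ih (ε/4) (by positivity)
    set K₂ := max K₁ (m+1) with hK₂
    have hK₂m : m + 1 ≤ K₂ := le_max_right _ _
    have hK₂K : K₁ ≤ K₂ := le_max_left _ _
    set N := 2*K₂ + r with hNdef
    have hsmall : ∀ j : ℕ, E (N + 2*j) ((m+1)-1) ≤ ε/4 := by
      intro j
      have e : N + 2*j = 2*(K₂+j)+r := by omega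
      rw [e, show (m+1)-1 = m from rfl]
      have := hK₁ (K₂+j) (le_trans hK₂K (Nat.le_add_right _ _))
      rw [Real.dist_eq, sub_zero] at this
      exact (le_abs_self _).trans this.le
    have hkey := key_iter (m+1) N (by omega) (by omega) (ε/4) (by positivity) hsmall
    have hDD : Tendsto (fun j : ℕ => DD (N + 2*j)) atTop (nhds 0) := by
      have h1 : Tendsto (fun j : ℕ => j + K₂) atTop atTop := tendsto_add_atTop_nat K₂
      have := (tendsto_DD_par r hr).comp h1
      refine this.congr fun j => ?_
      simp only [Function.comp]
      congr 1
      omega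
    have hDDN := DD_pos N
    have hδ : (0:ℝ) < (ε/4) * DD N / ((m:ℝ)+1) := by positivity
    obtain ⟨J, hJ⟩ := eventually_atTop.mp (hDD.eventually (gt_mem_nhds hδ))
    refine ⟨K₂ + J, fun k hk => ?_⟩
    obtain ⟨j, hjJ, hje⟩ : ∃ j, j ≥ J ∧ 2*k + r = N + 2*j :=
      ⟨k - K₂, by omega, by omega⟩
    rw [Real.dist_eq, sub_zero]
    have hnn : 0 ≤ E (2*k+r) (m+1) := E_nonneg _ _ (by omega)
    rw [abs_of_nonneg hnn, hje]
    have h1 := hkey j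
    have hc : ((m+1:ℕ):ℝ) = (m:ℝ)+1 := by push_cast; ring
    rw [hc] at h1
    have hm1 : (1:ℝ) ≤ (m:ℝ) := by exact_mod_cast hm
    have hBle : ((m:ℝ)+1)*(ε/4)/(((m:ℝ)+1)-1) ≤ ε/2 := by
      rw [div_le_iff₀ (by linarith)]
      nlinarith
    have h2 : ((m:ℝ)+1) * DD (N + 2*j) < ((m:ℝ)+1) * ((ε/4) * DD N / ((m:ℝ)+1)) :=
      mul_lt_mul_of_pos_left (hJ j hjJ) (by positivity)
    have h3 : ((m:ℝ)+1) * ((ε/4) * DD N / ((m:ℝ)+1)) = (ε/4) * DD N := by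
      field_simp
    have h4 : E (N + 2*j) (m+1) - ((m:ℝ)+1)*(ε/4)/(((m:ℝ)+1)-1)
        ≤ ((m:ℝ)+1) * DD (N + 2*j) / DD N := by
      rw [le_div_iff₀ hDDN]
      exact h1
    have h5 : ((m:ℝ)+1) * DD (N + 2*j) / DD N < ε/4 := by
      rw [div_lt_iff₀ hDDN]
      exact lt_of_lt_of_le h2 (le_of_eq h3)
    linarith

lemma ratio_eq (n m : ℕ) (hm : 1 ≤ m) :
    (w n m : ℝ) / ((m:ℝ) * (dfact (n-1) : ℝ) / (dfact n : ℝ)) = ((m:ℝ) - E n m)/(m:ℝ) := by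
  have hm0 : (m:ℝ) ≠ 0 := Nat.cast_ne_zero.mpr (by omega)
  unfold E
  have h1 := (dfact_pos' n).ne'
  have h2 := (dfact_pos' (n-1)).ne'
  rw [div_eq_div_iff (by positivity) hm0]
  field_simp
  ring

lemma sqrt_eq (n m : ℕ) (x : ℝ) :
    ((m:ℝ) - E n m) * ((dfact (n-1):ℝ)/(dfact n:ℝ) * x) = (w n m : ℝ) * x := by
  unfold E
  have h1 := (dfact_pos' n).ne'
  have h2 := (dfact_pos' (n-1)).ne'
  field_simp
  ring

theorem stmt_17 (m : ℕ) (hm : 1 ≤ m) :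
    (Tendsto (fun k : ℕ => (w (2 * k + 1) m : ℝ) /
        ((m : ℝ) * (dfact (2 * k) : ℝ) / (dfact (2 * k + 1) : ℝ)))
      atTop (nhds 1)) ∧
    (Tendsto (fun k : ℕ => (w (2 * k) m : ℝ) /
        ((m : ℝ) * (dfact (2 * k - 1) : ℝ) / (dfact (2 * k) : ℝ)))
      atTop (nhds 1)) ∧
    (Tendsto (fun k : ℕ => (w (2 * k + 1) m : ℝ) * Real.sqrt (2 * k + 1))
      atTop (nhds ((m : ℝ) * Real.sqrt (π / 2)))) ∧
    (Tendsto (fun k : ℕ => (w (2 * k) m : ℝ) * Real.sqrt (2 * k))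
      atTop (nhds ((m : ℝ) * Real.sqrt (2 / π)))) := by
  have hm0 : (m:ℝ) ≠ 0 := Nat.cast_ne_zero.mpr (by omega)
  have hE1 : Tendsto (fun k : ℕ => E (2*k+1) m) atTop (nhds 0) := E_tendsto 1 le_rfl m hm
  have hE0 : Tendsto (fun k : ℕ => E (2*k) m) atTop (nhds 0) := by
    have := E_tendsto 0 (by omega) m hm
    exact this.congr fun k => by norm_num
  have hsub1 : Tendsto (fun k : ℕ => (m:ℝ) - E (2*k+1) m) atTop (nhds (m:ℝ)) := by
    have := (tendsto_const_nhds : Tendsto (fun _ : ℕ => (m:ℝ)) atTop (nhds (m:ℝ))).sub hE1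
    simpa using this
  have hsub0 : Tendsto (fun k : ℕ => (m:ℝ) - E (2*k) m) atTop (nhds (m:ℝ)) := by
    have := (tendsto_const_nhds : Tendsto (fun _ : ℕ => (m:ℝ)) atTop (nhds (m:ℝ))).sub hE0
    simpa using this
  refine ⟨?_, ?_, ?_, ?_⟩
  · have h := hsub1.div_const (m:ℝ)
    rw [div_self hm0] at h
    refine h.congr fun k => ?_
    have := ratio_eq (2*k+1) m hm
    simp only [Nat.add_sub_cancel] at this
    rw [this]
  · have h := hsub0.div_const (m:ℝ)
    rw [div_self hm0] at h
    refine h.congr fun k => ?_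
    exact (ratio_eq (2*k) m hm).symm
  · have h := hsub1.mul tendsto_pp_sqrt
    refine h.congr fun k => ?_
    have := sqrt_eq (2*k+1) m (Real.sqrt (2*(k:ℝ)+1))
    simp only [Nat.add_sub_cancel] at this
    simp only [pp]
    exact this
  · have h := hsub0.mul tendsto_qq_sqrt
    refine h.congr fun k => ?_
    have := sqrt_eq (2*k) m (Real.sqrt (2*(k:ℝ)))
    simp only [qq]
    exact this
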